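/- arXiv:2202.08328 — 2 statements merged into one kernel-verified Lean document; each statement's English description precedes it below -/
import Mathlib

section
/- In the idempotent semifield quotient of the previous construction: for an idempotent semifield S, in the semiring ℕ[S∖{0}] modulo the preorder generated by the relations 1·b ≤ Σ 1·aᵢ (whenever Σaᵢ = b + Σ_{i≠k}aᵢ in S for all k) together with 1 ≡ 1+1, one has [Σᵢ mᵢ·sᵢ] = [Σᵢ 1·sᵢ] for all positive integers mᵢ and elements sᵢ ∈ S, and moreover [1·a] + [1·b] = [1·(a+b)] for all a, b ∈ S. -/
noncomputable section

open MonoidAlgebra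

/-- The generating relations on `ℕ[S]` (the monoid semiring of the multiplicative
monoid of `S`): the identification `1·0_S ≡ 0` (turning `ℕ[S]` into the
semiring-algebra `ℕ[S∖{0}]`), the relations `1·b ≤ Σᵢ 1·aᵢ` whenever
`Σᵢ aᵢ = b + Σ_{i≠k} aᵢ` holds in `S` for every `k`, and `1 ≡ 1 + 1`. -/
inductive smonGen (S : Type*) [CommSemiring S] :
    MonoidAlgebra ℕ S → MonoidAlgebra ℕ S → Prop
  | zero_le : smonGen S (MonoidAlgebra.single (0 : S) 1) 0
  | le_zero : smonGen S 0 (MonoidAlgebra.single (0 : S) 1)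
  | rel (m : ℕ) (a : Fin m → S) (b : S)
      (h : ∀ k : Fin m, ∑ i, a i = b + ∑ i ∈ Finset.univ.erase k, a i) :
      smonGen S (MonoidAlgebra.single b 1) (∑ i, MonoidAlgebra.single (a i) 1)
  | idem_le : smonGen S 1 (1 + 1)
  | le_idem : smonGen S (1 + 1) 1

/-- An additive and multiplicative preorder on a semiring. -/
def IsAMPreorder {R : Type*} [Semiring R] (p : R → R → Prop) : Prop :=
  Reflexive p ∧ Transitive p ∧ (∀ a b z : R, p a b → p (a + z) (b + z)) ∧
    (∀ a b z : R, p a b → p (a * z) (b * z))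

/-- The smallest additive and multiplicative preorder on `ℕ[S]` containing the
generating relations `smonGen`. -/
def smonLe (S : Type*) [CommSemiring S] :
    MonoidAlgebra ℕ S → MonoidAlgebra ℕ S → Prop := fun a b =>
  ∀ p : MonoidAlgebra ℕ S → MonoidAlgebra ℕ S → Prop,
    IsAMPreorder p → (∀ x y, smonGen S x y → p x y) → p a b

/-- The congruence induced by the preorder `smonLe`. -/
def smonC (S : Type*) [CommSemiring S] :
    MonoidAlgebra ℕ S → MonoidAlgebra ℕ S → Prop := fun a b =>
  smonLe S a b ∧ smonLe S b a

section Helpers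

variable {S : Type*} [CommSemiring S]

private lemma sLe_refl (a : MonoidAlgebra ℕ S) : smonLe S a a := fun _ hp _ => hp.1 a

private lemma sLe_trans {a b c : MonoidAlgebra ℕ S} (h1 : smonLe S a b) (h2 : smonLe S b c) :
    smonLe S a c := fun p hp hg => hp.2.1 (h1 p hp hg) (h2 p hp hg)

private lemma sLe_add {a b : MonoidAlgebra ℕ S} (z : MonoidAlgebra ℕ S) (h : smonLe S a b) :
    smonLe S (a + z) (b + z) := fun p hp hg => hp.2.2.1 a b z (h p hp hg)

private lemma sLe_mul {a b : MonoidAlgebra ℕ S} (z : MonoidAlgebra ℕ S) (h : smonLe S a b) :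
    smonLe S (a * z) (b * z) := fun p hp hg => hp.2.2.2 a b z (h p hp hg)

private lemma sLe_gen {a b : MonoidAlgebra ℕ S} (h : smonGen S a b) : smonLe S a b :=
  fun _ _ hg => hg a b h

private lemma sLe_add_left {a b : MonoidAlgebra ℕ S} (z : MonoidAlgebra ℕ S)
    (h : smonLe S a b) : smonLe S (z + a) (z + b) := by
  rw [add_comm z a, add_comm z b]; exact sLe_add z h

private lemma sC_refl (a : MonoidAlgebra ℕ S) : smonC S a a := ⟨sLe_refl a, sLe_refl a⟩

private lemma sC_symm {a b : MonoidAlgebra ℕ S} (h : smonC S a b) : smonC S b a := ⟨h.2, h.1⟩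

private lemma sC_trans {a b c : MonoidAlgebra ℕ S} (h1 : smonC S a b) (h2 : smonC S b c) :
    smonC S a c := ⟨sLe_trans h1.1 h2.1, sLe_trans h2.2 h1.2⟩

private lemma sC_add {a b c d : MonoidAlgebra ℕ S} (h1 : smonC S a b) (h2 : smonC S c d) :
    smonC S (a + c) (b + d) :=
  ⟨sLe_trans (sLe_add c h1.1) (sLe_add_left b h2.1),
   sLe_trans (sLe_add d h1.2) (sLe_add_left a h2.2)⟩

/-- `z + z ≡ z` for every `z`. -/
private lemma sC_dup (z : MonoidAlgebra ℕ S) : smonC S (z + z) z := by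
  have h1 : smonLe S ((1 + 1) * z) (1 * z) := sLe_mul z (sLe_gen smonGen.le_idem)
  have h2 : smonLe S (1 * z) ((1 + 1) * z) := sLe_mul z (sLe_gen smonGen.idem_le)
  rw [one_mul, add_mul, one_mul] at h1 h2
  exact ⟨h1, h2⟩

/-- `single s n ≡ single s 1` for `n ≥ 1`. -/
private lemma sC_single (s : S) : ∀ n : ℕ, smonC S (MonoidAlgebra.single s (n + 1))
    (MonoidAlgebra.single s 1)
  | 0 => sC_refl _
  | n + 1 => by
    have : (MonoidAlgebra.single s (n + 1 + 1) : MonoidAlgebra ℕ S) =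
        MonoidAlgebra.single s (n + 1) + MonoidAlgebra.single s 1 := by
      rw [← MonoidAlgebra.single_add]
    rw [this]
    exact sC_trans (sC_add (sC_single s n) (sC_refl _)) (sC_dup _)

private lemma sC_sum {m : ℕ} (f g : Fin m → MonoidAlgebra ℕ S)
    (h : ∀ i, smonC S (f i) (g i)) : smonC S (∑ i, f i) (∑ i, g i) := by
  induction m with
  | zero => simpa using sC_refl (0 : MonoidAlgebra ℕ S)
  | succ n ih =>
    rw [Fin.sum_univ_succ, Fin.sum_univ_succ]
    exact sC_add (h 0) (ih _ _ fun i => h i.succ)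

end Helpers

/-- In the quotient of `ℕ[S∖{0}]` by the congruence induced by the
preorder generated by the relations `1·b ≤ Σ 1·aᵢ` (whenever `Σaᵢ = b + Σ_{i≠k}aᵢ`
in `S` for all `k`) together with `1 ≡ 1+1`, one has `[Σᵢ mᵢ·sᵢ] = [Σᵢ 1·sᵢ]` for
all positive integers `mᵢ` and `sᵢ ∈ S`, and `[1·a] + [1·b] = [1·(a+b)]` for all
`a, b ∈ S`. -/

theorem stmt5 (S : Type*) [CommSemiring S]
    (hidem : ∀ x : S, x + x = x)
    (hinv : ∀ x : S, x ≠ 0 → ∃ y : S, x * y = 1) :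
    (∀ (m : ℕ) (mult : Fin m → ℕ), (∀ i, 0 < mult i) → ∀ s : Fin m → S,
      Quot.mk (smonC S) (∑ i, MonoidAlgebra.single (s i) (mult i)) =
        Quot.mk (smonC S) (∑ i, MonoidAlgebra.single (s i) 1)) ∧
    (∀ a b : S,
      Quot.mk (smonC S) (MonoidAlgebra.single a 1 + MonoidAlgebra.single b 1) =
        Quot.mk (smonC S) (MonoidAlgebra.single (a + b) 1)) := by
  constructor
  · intro m mult hpos s
    apply Quot.sound
    apply sC_sum
    intro i
    obtain ⟨n, hn⟩ := Nat.exists_eq_add_of_lt (hpos i)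
    rw [hn, Nat.zero_add]
    exact sC_single (s i) n
  · intro a b
    apply Quot.sound
    set D : MonoidAlgebra ℕ S := MonoidAlgebra.single (a + b) 1 with hD
    have e0 : (Finset.univ.erase (0 : Fin 2)) = {1} := by decide
    have e1 : (Finset.univ.erase (1 : Fin 2)) = {0} := by decide
    have hA : ∀ x y : S, x + (x + y) = x + y := fun x y => by rw [← add_assoc, hidem]
    have hB : ∀ x y : S, x + y + y = x + y := fun x y => by rw [add_assoc, hidem]
    have hge : smonLe S D (MonoidAlgebra.single a 1 + MonoidAlgebra.single b 1) := by
      have := sLe_gen (smonGen.rel 2 ![a, b] (a + b) (by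
        intro k
        fin_cases k <;>
          simp [e0, e1, Fin.sum_univ_two, hidem, hA, hB, add_comm, add_left_comm, add_assoc]))
      simpa [Fin.sum_univ_two] using this
    have ha : smonLe S (MonoidAlgebra.single a 1) (D + D) := by
      have := sLe_gen (smonGen.rel 2 ![a + b, a + b] a (by
        intro k
        fin_cases k <;>
          simp [e0, e1, Fin.sum_univ_two, hidem, hA, hB, add_comm, add_left_comm, add_assoc]))
      simpa [Fin.sum_univ_two, hD] using this
    have hb : smonLe S (MonoidAlgebra.single b 1) (D + D) := by
      have := sLe_gen (smonGen.rel 2 ![a + b, a + b] b (by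
        intro k
        fin_cases k <;>
          simp [e0, e1, Fin.sum_univ_two, hidem, hA, hB, add_comm, add_left_comm, add_assoc]))
      simpa [Fin.sum_univ_two, hD] using this
    have hDD : smonLe S (D + D) D := (sC_dup D).1
    have hle : smonLe S (MonoidAlgebra.single a 1 + MonoidAlgebra.single b 1) D :=
      sLe_trans (sLe_add _ ha) (sLe_trans (sLe_add_left _ hb)
        (sLe_trans (sLe_add _ hDD) (sLe_trans (sLe_add_left _ hDD) hDD)))
    exact ⟨hle, hge⟩
end
end

section
/- Let S be an idempotent commutative semiring. The quotient of the tensor algebra T(Sⁿ) (over the free S-semimodule Sⁿ) by the congruence generated by {eᵢ ⊗ eⱼ ≡ eⱼ ⊗ eᵢ : i, j ∈ [n]} ∪ {eᵢ ⊗ eᵢ ≡ 0 : i ∈ [n]} is a free S-semimodule with basis {e_I : I ⊆ [n]}, where e_I = e_{i₁}⋯e_{i_d} for I = {i₁ < ⋯ < i_d}; in particular it is free of rank 2ⁿ over S. -/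
noncomputable section

open TensorAlgebra

/-- The `i`-th standard basis vector of the free semimodule `Sⁿ`. -/
def stdB (S : Type*) [CommSemiring S] (n : ℕ) (i : Fin n) : Fin n → S := Pi.single i 1

/-- The generating relations of the tropical Grassmann algebra:
`eᵢ ⊗ eⱼ ≡ eⱼ ⊗ eᵢ` and `eᵢ ⊗ eᵢ ≡ 0`. -/
inductive tropRel (S : Type*) [CommSemiring S] (n : ℕ) :
    TensorAlgebra S (Fin n → S) → TensorAlgebra S (Fin n → S) → Prop
  | sq (i : Fin n) :
      tropRel S n (ι S (stdB S n i) * ι S (stdB S n i)) 0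
  | comm (i j : Fin n) :
      tropRel S n (ι S (stdB S n i) * ι S (stdB S n j)) (ι S (stdB S n j) * ι S (stdB S n i))

/-- The tropical Grassmann algebra `Λ(Sⁿ)`: the quotient of the tensor algebra
`T(Sⁿ)` by the congruence generated by the relations `tropRel`. -/
abbrev TropGrass (S : Type*) [CommSemiring S] (n : ℕ) : Type _ :=
  RingQuot (tropRel S n)

/-- `e_I = e_{i₁} ⋯ e_{i_d}` for `I = {i₁ < ⋯ < i_d}` (with `e_∅ = 1`). -/
def eI (S : Type*) [CommSemiring S] (n : ℕ) (I : Finset (Fin n)) : TropGrass S n :=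
  ((I.sort (· ≤ ·)).map
    (fun i => RingQuot.mkAlgHom S (tropRel S n) (ι S (stdB S n i)))).prod

namespace TropAux

variable (S : Type*) [CommSemiring S] (n : ℕ)

/-- The generator `e_i` in the tropical Grassmann algebra. -/
def gg (i : Fin n) : TropGrass S n :=
  RingQuot.mkAlgHom S (tropRel S n) (ι S (stdB S n i))

variable {S n}

lemma gg_sq (i : Fin n) : gg S n i * gg S n i = 0 := by
  have h := RingQuot.mkAlgHom_rel S (tropRel.sq (S := S) (n := n) i)
  simpa [gg, map_mul] using h

lemma gg_comm (i j : Fin n) : gg S n i * gg S n j = gg S n j * gg S n i := by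
  have h := RingQuot.mkAlgHom_rel S (tropRel.comm (S := S) (n := n) i j)
  simpa [gg, map_mul] using h

lemma gg_commute (i j : Fin n) : Commute (gg S n i) (gg S n j) := gg_comm i j

/-- product of generators along a list -/
def PL (S : Type*) [CommSemiring S] {n : ℕ} (l : List (Fin n)) : TropGrass S n :=
  (l.map (gg S n)).prod

lemma PL_nil : PL S ([] : List (Fin n)) = (1 : TropGrass S n) := rfl

lemma PL_cons (a : Fin n) (l : List (Fin n)) :
    PL S (a :: l) = gg S n a * PL S l := by simp [PL]

lemma PL_append (l₁ l₂ : List (Fin n)) : PL S (l₁ ++ l₂) = PL S l₁ * PL S l₂ := by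
  simp [PL]

lemma PL_perm {l₁ l₂ : List (Fin n)} (h : l₁.Perm l₂) : PL S l₁ = PL S l₂ := by
  refine List.Perm.prod_eq' (h.map (gg S n)) ?_
  refine List.pairwise_map.2 ?_
  clear h
  induction l₁ with
  | nil => exact List.Pairwise.nil
  | cons a t ih => exact List.Pairwise.cons (fun b _ => gg_commute a b) ih

lemma gg_mul_PL_of_mem {a : Fin n} {l : List (Fin n)} (h : a ∈ l) :
    gg S n a * PL S l = 0 := by
  induction l with
  | nil => simp at h
  | cons b t ih =>
    rcases List.mem_cons.1 h with h | h
    · subst h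
      rw [PL_cons, ← mul_assoc, gg_sq, zero_mul]
    · rw [PL_cons, ← mul_assoc, gg_comm, mul_assoc, ih h, mul_zero]

lemma PL_eq_zero_of_not_nodup {l : List (Fin n)} (h : ¬ l.Nodup) :
    PL S l = 0 := by
  induction l with
  | nil => simp at h
  | cons a t ih =>
    rw [List.nodup_cons] at h
    push_neg at h
    by_cases ha : a ∈ t
    · rw [PL_cons, gg_mul_PL_of_mem ha]
    · rw [PL_cons, ih (h ha), mul_zero]

lemma eI_eq_PL (I : Finset (Fin n)) : eI S n I = PL S (I.sort (· ≤ ·)) := rfl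

lemma eI_empty : eI S n (∅ : Finset (Fin n)) = 1 := by
  simp [eI]

lemma eI_mul_eI (I J : Finset (Fin n)) :
    eI S n I * eI S n J =
      if Disjoint I J then eI S n (I ∪ J) else 0 := by
  rw [eI_eq_PL, eI_eq_PL, ← PL_append]
  split_ifs with h
  · rw [eI_eq_PL]
    refine PL_perm ?_
    rw [← Multiset.coe_eq_coe, ← Multiset.coe_add, Finset.sort_eq, Finset.sort_eq,
      Finset.sort_eq, ← Finset.disjUnion_eq_union I J h]
    rfl
  · refine PL_eq_zero_of_not_nodup ?_
    intro hnd
    rw [List.nodup_append] at hnd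
    refine h (Finset.disjoint_left.2 fun a haI haJ => ?_)
    exact hnd.2.2 a ((Finset.mem_sort _).2 haI) a ((Finset.mem_sort _).2 haJ) rfl

/-! ### The model: endomorphisms of the free module on `Finset (Fin n)` -/

variable (S n)

/-- Free `S`-semimodule with basis indexed by subsets of `[n]`. -/
abbrev FM := Finset (Fin n) →₀ S

/-- The "left multiplication by `e_i`" operator on the model. -/
def LL (i : Fin n) : Module.End S (FM S n) :=
  Finsupp.lsum S fun I =>
    if i ∈ I then (0 : S →ₗ[S] FM S n) else Finsupp.lsingle (insert i I)

variable {S n}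

lemma LL_single (i : Fin n) (I : Finset (Fin n)) (c : S) :
    LL S n i (Finsupp.single I c) =
      if i ∈ I then 0 else Finsupp.single (insert i I) c := by
  simp only [LL, Finsupp.lsum_single]
  split_ifs with h <;> simp [h]

lemma LL_sq (i : Fin n) : LL S n i * LL S n i = 0 := by
  refine LinearMap.ext fun x => ?_
  induction x using Finsupp.induction_linear with
  | zero => simp
  | add f g hf hg =>
    simp only [Module.End.mul_apply, LinearMap.zero_apply, map_add] at hf hg ⊢
    rw [hf, hg, add_zero]
  | single I c =>
    simp only [Module.End.mul_apply, LL_single, LinearMap.zero_apply]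
    split_ifs with h
    · simp
    · rw [LL_single]
      simp [Finset.mem_insert]

lemma LL_comm (i j : Fin n) : LL S n i * LL S n j = LL S n j * LL S n i := by
  refine LinearMap.ext fun x => ?_
  induction x using Finsupp.induction_linear with
  | zero => simp
  | add f g hf hg => simp only [map_add, Module.End.mul_apply] at *; simp [hf, hg]
  | single I c =>
    by_cases hij : i = j
    · subst hij; rfl
    · simp only [Module.End.mul_apply, LL_single]
      by_cases hi : i ∈ I <;> by_cases hj : j ∈ I <;>
        simp [hi, hj, LL_single, Finset.mem_insert, hij, Ne.symm hij, Finset.insert_comm]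

variable (S n)

/-- The linear map `Sⁿ → End(FM)` sending `v ↦ ∑ vᵢ • Lᵢ`. -/
def mu : (Fin n → S) →ₗ[S] Module.End S (FM S n) :=
  ∑ i : Fin n, (LinearMap.proj i : (Fin n → S) →ₗ[S] S).smulRight (LL S n i)

lemma mu_stdB (i : Fin n) : mu S n (stdB S n i) = LL S n i := by
  simp only [mu, LinearMap.sum_apply, LinearMap.smulRight_apply, LinearMap.proj_apply,
    stdB]
  rw [Finset.sum_eq_single i (fun b _ hb => by
      rw [Pi.single_eq_of_ne hb, zero_smul]) (by simp)]
  rw [Pi.single_eq_same, one_smul]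

/-- The algebra map `T(Sⁿ) → End(FM)`. -/
def Phi : TensorAlgebra S (Fin n → S) →ₐ[S] Module.End S (FM S n) :=
  TensorAlgebra.lift S (mu S n)

lemma Phi_rel : ∀ ⦃x y⦄, tropRel S n x y → Phi S n x = Phi S n y := by
  intro x y h
  cases h with
  | sq i => simp [Phi, map_mul, mu_stdB, ← Module.End.mul_eq_comp, LL_sq]
  | comm i j => simp [Phi, map_mul, mu_stdB, ← Module.End.mul_eq_comp, LL_comm i j]

/-- The induced algebra map on the quotient. -/
def Phi' : TropGrass S n →ₐ[S] Module.End S (FM S n) :=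
  RingQuot.liftAlgHom S ⟨Phi S n, Phi_rel S n⟩

lemma Phi'_gg (i : Fin n) : Phi' S n (gg S n i) = LL S n i := by
  rw [gg, Phi', RingQuot.liftAlgHom_mkAlgHom_apply]
  simp [Phi, mu_stdB]

/-- Evaluation of `Phi'` at `single ∅ 1`, a linear map `TropGrass → FM`. -/
def phi : TropGrass S n →ₗ[S] FM S n :=
  (LinearMap.applyₗ (Finsupp.single (∅ : Finset (Fin n)) (1 : S))).comp
    (Phi' S n).toLinearMap

variable {S n}

lemma phi_apply (x : TropGrass S n) :
    phi S n x = Phi' S n x (Finsupp.single ∅ 1) := rfl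

lemma prod_LL_single {l : List (Fin n)} (hnd : l.Nodup) :
    ((l.map (LL S n)).prod) (Finsupp.single (∅ : Finset (Fin n)) (1 : S)) =
      Finsupp.single l.toFinset 1 := by
  induction l with
  | nil => simp
  | cons a t ih =>
    rw [List.nodup_cons] at hnd
    simp only [List.map_cons, List.prod_cons, Module.End.mul_apply, ih hnd.2]
    rw [LL_single, if_neg (by simpa using hnd.1)]
    simp

lemma phi_eI (I : Finset (Fin n)) : phi S n (eI S n I) = Finsupp.single I 1 := by
  rw [phi_apply, eI_eq_PL, PL]
  rw [map_list_prod]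
  have : (List.map (gg S n) (I.sort (· ≤ ·))).map (Phi' S n) =
      (I.sort (· ≤ ·)).map (LL S n) := by
    rw [List.map_map]
    exact List.map_congr_left fun i _ => Phi'_gg S n i
  rw [this, prod_LL_single (Finset.sort_nodup _ _), Finset.sort_toFinset]

variable (S n)

/-- The linear map from the free module to the quotient, `single I 1 ↦ e_I`. -/
def psi : FM S n →ₗ[S] TropGrass S n :=
  Finsupp.linearCombination S (eI S n)

variable {S n}

lemma psi_single (I : Finset (Fin n)) : psi S n (Finsupp.single I 1) = eI S n I := by
  simp [psi]

lemma phi_psi (x : FM S n) : phi S n (psi S n x) = x := by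
  induction x using Finsupp.induction_linear with
  | zero => simp
  | add f g hf hg => simp [map_add, hf, hg]
  | single I c =>
    have : Finsupp.single I c = c • Finsupp.single I (1 : S) := by simp
    rw [this, map_smul, map_smul, psi_single, phi_eI]

lemma span_eI_top : Submodule.span S (Set.range (eI S n)) = ⊤ := by
  set p : Submodule S (TropGrass S n) := Submodule.span S (Set.range (eI S n)) with hp
  have h1 : (1 : TropGrass S n) ∈ p := by
    rw [← eI_empty]
    exact Submodule.subset_span ⟨∅, rfl⟩
  have hmul : ∀ x y : TropGrass S n, x ∈ p → y ∈ p → x * y ∈ p := by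
    intro x y hx hy
    have : p * p ≤ p := by
      rw [hp, Submodule.span_mul_span]
      refine Submodule.span_le.2 ?_
      rintro _ ⟨_, ⟨I, rfl⟩, _, ⟨J, rfl⟩, rfl⟩
      show eI S n I * eI S n J ∈ (Submodule.span S (Set.range (eI S n)) : Set _)
      rw [SetLike.mem_coe, eI_mul_eI]
      split_ifs
      · exact Submodule.subset_span ⟨I ∪ J, rfl⟩
      · exact Submodule.zero_mem p
    exact this (Submodule.mul_mem_mul hx hy)
  rw [eq_top_iff]
  rintro x -
  obtain ⟨y, rfl⟩ := RingQuot.mkAlgHom_surjective S (tropRel S n) x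
  induction y using TensorAlgebra.induction with
  | algebraMap r =>
    rw [AlgHom.commutes, Algebra.algebraMap_eq_smul_one]
    exact Submodule.smul_mem p r h1
  | ι v =>
    have hv : v = ∑ i : Fin n, v i • stdB S n i := by
      funext j
      rw [Finset.sum_apply]
      simp only [stdB, Pi.smul_apply]
      rw [Finset.sum_eq_single j (fun b _ hb => by
        rw [Pi.single_eq_of_ne (Ne.symm hb), smul_zero]) (by simp)]
      rw [Pi.single_eq_same, smul_eq_mul, mul_one]
    rw [hv, map_sum, map_sum]
    refine Submodule.sum_mem p fun i _ => ?_
    rw [map_smul, map_smul]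
    refine Submodule.smul_mem p _ ?_
    have : RingQuot.mkAlgHom S (tropRel S n) (ι S (stdB S n i)) = eI S n {i} := by
      rw [eI_eq_PL]
      have : ({i} : Finset (Fin n)).sort (· ≤ ·) = [i] := Finset.sort_singleton _ i
      rw [this, PL_cons, PL_nil, mul_one]; rfl
    rw [this]
    exact Submodule.subset_span ⟨{i}, rfl⟩
  | mul a b ha hb => rw [map_mul]; exact hmul _ _ ha hb
  | add a b ha hb => rw [map_add]; exact Submodule.add_mem p ha hb

lemma psi_bijective : Function.Bijective (psi S n) := by
  constructor
  · exact Function.LeftInverse.injective phi_psi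
  · rw [← LinearMap.range_eq_top, psi, Finsupp.range_linearCombination]
    exact span_eI_top

end TropAux

/-- Let `S` be an idempotent commutative semiring.  The tropical
Grassmann algebra `T(Sⁿ)/⟨eᵢ⊗eⱼ ≡ eⱼ⊗eᵢ, eᵢ⊗eᵢ ≡ 0⟩` is a free `S`-semimodule
with basis `{e_I : I ⊆ [n]}`; in particular it is free of rank `2ⁿ`. -/
theorem stmt8 (S : Type*) [CommSemiring S] (hidem : ∀ x : S, x + x = x) (n : ℕ) :
    ∃ b : Module.Basis (Finset (Fin n)) S (TropGrass S n),
      ∀ I : Finset (Fin n), b I = eI S n I := by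
  refine ⟨Finsupp.basisSingleOne.map (LinearEquiv.ofBijective (TropAux.psi S n)
    TropAux.psi_bijective), fun I => ?_⟩
  rw [Module.Basis.map_apply, Finsupp.coe_basisSingleOne]
  exact TropAux.psi_single I
end
end
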